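/- Let N be a monotone positively homogeneous function on nonnegative m×n matrices, and let A be an entrywise nonnegative m×n matrix with N(A) > 0. Then N*(A) ≤ τ₊(A)·N(A); that is, the self-scaled bound τ₊(A) dominates the norm-based bound: τ₊(A) ≥ N*(A)/N(A). -/

import Mathlib

open Matrix

/-- The set of atoms `𝒜₊(A)`: rank-at-most-one matrices `R` with `0 ≤ R ≤ A` entrywise. -/
noncomputable def Aplus {m n : Type*} [Fintype m] [Fintype n]
    (A : Matrix m n ℝ) : Set (Matrix m n ℝ) :=
  {R | R.rank ≤ 1 ∧ ∀ i j, 0 ≤ R i j ∧ R i j ≤ A i j}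

/-- `τ₊(A)`: supremum of `L(A)` over linear functionals `L` with `L ≤ 1` on `𝒜₊(A)`. -/
noncomputable def tauPlus {m n : Type*} [Fintype m] [Fintype n]
    (A : Matrix m n ℝ) : ℝ :=
  sSup {x | ∃ L : Matrix m n ℝ →ₗ[ℝ] ℝ, (∀ R ∈ Aplus A, L R ≤ 1) ∧ L A = x}

lemma rank_smul_le_aux {m n : ℕ} (c : ℝ) (R : Matrix (Fin m) (Fin n) ℝ) :
    (c • R).rank ≤ R.rank := by
  have h : c • R = (c • (1 : Matrix (Fin m) (Fin m) ℝ)) * R := by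
    rw [Matrix.smul_mul, Matrix.one_mul]
  rw [h]
  exact Matrix.rank_mul_le_right _ _

lemma rank_stdBasisMatrix_le_one_aux {m n : ℕ} (i : Fin m) (j : Fin n) (c : ℝ) :
    (Matrix.single i j c).rank ≤ 1 := by
  have h1 : Matrix.single i j c = c • Matrix.single i j (1 : ℝ) := by
    rw [Matrix.smul_single, smul_eq_mul, mul_one]
  calc (Matrix.single i j c).rank
      ≤ (Matrix.single i j (1 : ℝ)).rank := by
        rw [h1]; exact rank_smul_le_aux _ _
    _ ≤ 1 := by
        rw [Matrix.single_eq_single_vecMulVec_single,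
          Matrix.vecMulVec_eq Unit (Pi.single i (1:ℝ)) (Pi.single j (1:ℝ))]
        calc (Matrix.replicateCol Unit (Pi.single i (1:ℝ)) * Matrix.replicateRow Unit (Pi.single j (1:ℝ))).rank
            ≤ (Matrix.replicateCol Unit (Pi.single i (1:ℝ))).rank := Matrix.rank_mul_le_left _ _
          _ ≤ Fintype.card Unit := Matrix.rank_le_card_width _
          _ = 1 := by simp

lemma tauPlus_feasible_bound {m n : ℕ} (A : Matrix (Fin m) (Fin n) ℝ)
    (hA : ∀ i j, 0 ≤ A i j) (L : Matrix (Fin m) (Fin n) ℝ →ₗ[ℝ] ℝ)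
    (hL : ∀ R ∈ Aplus A, L R ≤ 1) : L A ≤ (m * n : ℝ) := by
  have hmem : ∀ i j, Matrix.single i j (A i j) ∈ Aplus A := by
    intro i j
    refine ⟨rank_stdBasisMatrix_le_one_aux i j _, fun i' j' => ?_⟩
    simp only [Matrix.single, Matrix.of_apply]
    split_ifs with h
    · obtain ⟨h1, h2⟩ := h; subst h1; subst h2; exact ⟨hA i j, le_refl _⟩
    · exact ⟨le_refl 0, hA i' j'⟩
  have hdecomp := Matrix.matrix_eq_sum_single A
  calc L A = ∑ i, ∑ j, L (Matrix.single i j (A i j)) := by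
        conv_lhs => rw [hdecomp]
        rw [map_sum]
        exact Finset.sum_congr rfl fun i _ => map_sum L _ _
    _ ≤ ∑ i : Fin m, ∑ j : Fin n, (1 : ℝ) :=
        Finset.sum_le_sum fun i _ => Finset.sum_le_sum fun j _ => hL _ (hmem i j)
    _ = (m * n : ℝ) := by simp

/-- the self-scaled bound `τ₊` dominates any norm-based bound: for a
monotone positively homogeneous `N` with `N(A) > 0`, one has `N*(A) ≤ τ₊(A)·N(A)`,
i.e. `τ₊(A) ≥ N*(A)/N(A)`. -/
theorem stmt12 {m n : ℕ} (N : Matrix (Fin m) (Fin n) ℝ → ℝ)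
    (hN0 : ∀ A : Matrix (Fin m) (Fin n) ℝ, (∀ i j, 0 ≤ A i j) → 0 ≤ N A)
    (hhom : ∀ A : Matrix (Fin m) (Fin n) ℝ, (∀ i j, 0 ≤ A i j) →
      ∀ c : ℝ, 0 ≤ c → N (c • A) = c * N A)
    (hmono : ∀ A B : Matrix (Fin m) (Fin n) ℝ, (∀ i j, 0 ≤ A i j) →
      (∀ i j, 0 ≤ B i j) → (∀ i j, A i j ≤ B i j) → N A ≤ N B)
    (A : Matrix (Fin m) (Fin n) ℝ) (hA : ∀ i j, 0 ≤ A i j) (hNA : 0 < N A) :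
    (sSup {x : ℝ | ∃ L : Matrix (Fin m) (Fin n) ℝ →ₗ[ℝ] ℝ,
        (∀ X : Matrix (Fin m) (Fin n) ℝ,
          (∀ i j, 0 ≤ X i j) → X.rank ≤ 1 → N X ≤ 1 → L X ≤ 1) ∧ L A = x}) ≤
      tauPlus A * N A ∧
    (sSup {x : ℝ | ∃ L : Matrix (Fin m) (Fin n) ℝ →ₗ[ℝ] ℝ,
        (∀ X : Matrix (Fin m) (Fin n) ℝ,
          (∀ i j, 0 ≤ X i j) → X.rank ≤ 1 → N X ≤ 1 → L X ≤ 1) ∧ L A = x}) / N A ≤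
      tauPlus A := by
  have hbddT : BddAbove {x | ∃ L : Matrix (Fin m) (Fin n) ℝ →ₗ[ℝ] ℝ,
      (∀ R ∈ Aplus A, L R ≤ 1) ∧ L A = x} := by
    refine ⟨(m * n : ℝ), ?_⟩
    rintro x ⟨L, hL, rfl⟩
    exact tauPlus_feasible_bound A hA L hL
  have hTnn : 0 ≤ tauPlus A := by
    apply le_csSup hbddT
    exact ⟨0, fun R _ => by simp, by simp⟩
  have key : (sSup {x : ℝ | ∃ L : Matrix (Fin m) (Fin n) ℝ →ₗ[ℝ] ℝ,
        (∀ X : Matrix (Fin m) (Fin n) ℝ,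
          (∀ i j, 0 ≤ X i j) → X.rank ≤ 1 → N X ≤ 1 → L X ≤ 1) ∧ L A = x}) ≤
      tauPlus A * N A := by
    apply Real.sSup_le
    · rintro x ⟨L, hL, rfl⟩
      set L' : Matrix (Fin m) (Fin n) ℝ →ₗ[ℝ] ℝ := (N A)⁻¹ • L with hL'def
      have hfeas : ∀ R ∈ Aplus A, L' R ≤ 1 := by
        rintro R ⟨hr, hRA⟩
        have hRnn : ∀ i j, 0 ≤ R i j := fun i j => (hRA i j).1
        have hNR : N R ≤ N A := hmono R A hRnn hA (fun i j => (hRA i j).2)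
        have hXnn : ∀ i j, 0 ≤ ((N A)⁻¹ • R) i j := fun i j => by
          simp only [Matrix.smul_apply, smul_eq_mul]
          exact mul_nonneg (inv_nonneg.mpr hNA.le) (hRnn i j)
        have hXrank : ((N A)⁻¹ • R).rank ≤ 1 :=
          le_trans (rank_smul_le_aux _ _) hr
        have hXN : N ((N A)⁻¹ • R) ≤ 1 := by
          rw [hhom R hRnn _ (inv_nonneg.mpr hNA.le)]
          calc (N A)⁻¹ * N R ≤ (N A)⁻¹ * N A :=
                mul_le_mul_of_nonneg_left hNR (inv_nonneg.mpr hNA.le)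
            _ = 1 := inv_mul_cancel₀ hNA.ne'
        have := hL _ hXnn hXrank hXN
        rwa [_root_.map_smul, smul_eq_mul] at this
      have hmem : L' A ∈ {x | ∃ L : Matrix (Fin m) (Fin n) ℝ →ₗ[ℝ] ℝ,
          (∀ R ∈ Aplus A, L R ≤ 1) ∧ L A = x} := ⟨L', hfeas, rfl⟩
      have hle : L' A ≤ tauPlus A := le_csSup hbddT hmem
      have hL'A : L' A = (N A)⁻¹ * L A := by
        simp [hL'def]
      have := mul_le_mul_of_nonneg_right hle hNA.le
      rw [hL'A] at this
      calc L A = (N A)⁻¹ * L A * N A := by field_simp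
        _ ≤ tauPlus A * N A := this
    · exact mul_nonneg hTnn hNA.le
  exact ⟨key, (div_le_iff₀ hNA).mpr key⟩
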